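/- Let Ω ⊂ ℝ^d be a bounded open set, S := ℝ^d∖Ω, and h > 0. Then for all measurable u, v: Ω → [0,1] (extended by 0 to ℝ^d), |E_h(u) − E_h(v)| ≤ (4 C̃ / √h) ‖u − v‖_{L¹(Ω)}. In particular, for each fixed h > 0 the functional E_h is continuous on {u: Ω → [0,1] measurable} with respect to the strong L¹(Ω) topology. -/
import Mathlib


open MeasureTheory Filter

/-- The rescaled kernel `K_h(x) = h^{-d/2} K(x/√h)`. -/
noncomputable def scaledKernel {d : ℕ} (K : EuclideanSpace ℝ (Fin d) → ℝ) (h : ℝ)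
    (x : EuclideanSpace ℝ (Fin d)) : ℝ :=
  h ^ (-(d : ℝ) / 2) * K ((Real.sqrt h)⁻¹ • x)

/-- Convolution over `ℝ^d`: `(f * g)(x) = ∫ f(x-y) g(y) dy`. -/
noncomputable def convK {d : ℕ} (f g : EuclideanSpace ℝ (Fin d) → ℝ)
    (x : EuclideanSpace ℝ (Fin d)) : ℝ :=
  ∫ y, f (x - y) * g y

/-- The approximate thresholding energy
`E_h(u) = (1/√h) ∫_Ω [ γ̃PV u K_h*(1_Ω - u) + γ̃SP u K_h*1_S + γ̃SV (1_Ω - u) K_h*1_S ] dx`,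
where `S = ℝ^d ∖ Ω = Ωᶜ`. -/
noncomputable def threshEnergy {d : ℕ} (Ω : Set (EuclideanSpace ℝ (Fin d)))
    (γPV γSP γSV K : EuclideanSpace ℝ (Fin d) → ℝ) (h : ℝ)
    (u : EuclideanSpace ℝ (Fin d) → ℝ) : ℝ :=
  (Real.sqrt h)⁻¹ * ∫ x in Ω,
    (γPV x * (u x * convK (scaledKernel K h) (fun y => Set.indicator Ω 1 y - u y) x)
      + γSP x * (u x * convK (scaledKernel K h) (Set.indicator Ωᶜ 1) x)
      + γSV x * ((Set.indicator Ω 1 x - u x) * convK (scaledKernel K h) (Set.indicator Ωᶜ 1) x))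

/-- `L¹`-Lipschitz continuity of the approximate energy at fixed `h`:
`|E_h(u) - E_h(v)| ≤ (4 C̃ / √h) ‖u - v‖_{L¹(Ω)}`. -/
theorem energy_L1_continuity {d : ℕ}
    (Ω : Set (EuclideanSpace ℝ (Fin d))) (hΩo : IsOpen Ω)
    (hΩb : Bornology.IsBounded Ω) (hΩm : MeasurableSet Ω)
    (K : EuclideanSpace ℝ (Fin d) → ℝ) (hKmeas : Measurable K)
    (hKnonneg : ∀ x, 0 ≤ K x) (hKsymm : ∀ x, K (-x) = K x)
    (hKint : Integrable K) (hKone : (∫ x, K x) = 1)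
    (γPV γSP γSV : EuclideanSpace ℝ (Fin d) → ℝ)
    (hPVmeas : Measurable γPV) (hSPmeas : Measurable γSP) (hSVmeas : Measurable γSV)
    (Ctil : ℝ)
    (hPVb : ∀ x, 0 ≤ γPV x ∧ γPV x ≤ Ctil)
    (hSPb : ∀ x, 0 ≤ γSP x ∧ γSP x ≤ Ctil)
    (hSVb : ∀ x, 0 ≤ γSV x ∧ γSV x ≤ Ctil)
    (u v : EuclideanSpace ℝ (Fin d) → ℝ)
    (humeas : Measurable u) (hvmeas : Measurable v)
    (hu01 : ∀ x, u x ∈ Set.Icc (0:ℝ) 1) (hv01 : ∀ x, v x ∈ Set.Icc (0:ℝ) 1)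
    (husupp : ∀ x ∉ Ω, u x = 0) (hvsupp : ∀ x ∉ Ω, v x = 0)
    (h : ℝ) (hh : 0 < h) :
    |threshEnergy Ω γPV γSP γSV K h u - threshEnergy Ω γPV γSP γSV K h v|
      ≤ (4 * Ctil / Real.sqrt h) * ∫ x in Ω, |u x - v x| := by
  have hs : 0 < Real.sqrt h := Real.sqrt_pos.mpr hh
  have hC : (0:ℝ) ≤ Ctil := le_trans (hPVb 0).1 (hPVb 0).2
  have absInt : ∀ (μ : Measure (EuclideanSpace ℝ (Fin d))) (g : EuclideanSpace ℝ (Fin d) → ℝ),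
      |∫ x, g x ∂μ| ≤ ∫ x, |g x| ∂μ := by
    intro μ g
    have := norm_integral_le_integral_norm (μ := μ) g
    simpa only [Real.norm_eq_abs] using this
  unfold threshEnergy
  set Kh := scaledKernel K h with hKhdef
  -- kernel facts
  have hKhmeas : Measurable Kh := by
    rw [hKhdef]
    exact (hKmeas.comp (measurable_const_smul _)).const_mul _
  have hKhnn : ∀ x, 0 ≤ Kh x := fun x =>
    mul_nonneg (Real.rpow_nonneg hh.le _) (hKnonneg _)
  have hKhint : Integrable Kh := by
    rw [hKhdef]
    exact ((integrable_comp_smul_iff volume K (inv_ne_zero hs.ne')).mpr hKint).const_mul _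
  have hsd : (Real.sqrt h) ^ d = h ^ ((d:ℝ)/2) := by
    rw [← Real.rpow_natCast (Real.sqrt h) d, Real.sqrt_eq_rpow, ← Real.rpow_mul hh.le]
    congr 1
    ring
  have hKhone : (∫ x, Kh x) = 1 := by
    rw [hKhdef]
    show (∫ x, h ^ (-(d : ℝ) / 2) * K ((Real.sqrt h)⁻¹ • x)) = 1
    rw [integral_const_mul, Measure.integral_comp_inv_smul_of_nonneg volume K (Real.sqrt_nonneg h),
      finrank_euclideanSpace_fin, hKone, smul_eq_mul, mul_one, hsd, ← Real.rpow_add hh,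
      neg_div, neg_add_cancel, Real.rpow_zero]
  have hKhy : ∀ x : EuclideanSpace ℝ (Fin d), Integrable (fun y => Kh (x - y)) :=
    fun x => hKhint.comp_sub_left x
  have hKhyone : ∀ x : EuclideanSpace ℝ (Fin d), (∫ y, Kh (x - y)) = 1 := fun x => by
    rw [integral_sub_left_eq_self Kh volume x, hKhone]
  -- convolution generic facts
  have convInt : ∀ w : EuclideanSpace ℝ (Fin d) → ℝ, Measurable w → (∀ y, |w y| ≤ 1) →
      ∀ x, Integrable (fun y => Kh (x - y) * w y) := by
    intro w hw hwb x
    refine (hKhy x).mono' ?_ ?_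
    · exact ((hKhmeas.comp (measurable_const.sub measurable_id)).mul hw).aestronglyMeasurable
    · refine Eventually.of_forall fun y => ?_
      rw [Real.norm_eq_abs, abs_mul, abs_of_nonneg (hKhnn _)]
      calc Kh (x - y) * |w y| ≤ Kh (x - y) * 1 :=
            mul_le_mul_of_nonneg_left (hwb y) (hKhnn _)
        _ = Kh (x - y) := mul_one _
  have conv01 : ∀ w : EuclideanSpace ℝ (Fin d) → ℝ, Measurable w →
      (∀ y, w y ∈ Set.Icc (0:ℝ) 1) → ∀ x, convK Kh w x ∈ Set.Icc (0:ℝ) 1 := by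
    intro w hw hw01 x
    have hwb : ∀ y, |w y| ≤ 1 := fun y => abs_le.mpr ⟨by linarith [(hw01 y).1], (hw01 y).2⟩
    rw [Set.mem_Icc]
    constructor
    · exact integral_nonneg fun y => mul_nonneg (hKhnn _) (hw01 y).1
    · calc convK Kh w x ≤ ∫ y, Kh (x - y) := by
            refine integral_mono (convInt w hw hwb x) (hKhy x) fun y => ?_
            calc Kh (x - y) * w y ≤ Kh (x - y) * 1 :=
                  mul_le_mul_of_nonneg_left (hw01 y).2 (hKhnn _)
              _ = Kh (x - y) := mul_one _
        _ = 1 := hKhyone x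
  have convMeas : ∀ w : EuclideanSpace ℝ (Fin d) → ℝ, Measurable w →
      StronglyMeasurable (convK Kh w) := by
    intro w hw
    exact (((hKhmeas.comp (measurable_fst.sub measurable_snd)).mul
      (hw.comp measurable_snd)).stronglyMeasurable).integral_prod_right'
  -- the relevant w's
  have hwumeas : Measurable (fun y => Set.indicator Ω 1 y - u y) :=
    (measurable_one.indicator hΩm).sub humeas
  have hwvmeas : Measurable (fun y => Set.indicator Ω 1 y - v y) :=
    (measurable_one.indicator hΩm).sub hvmeas
  have hwu01 : ∀ y, Set.indicator Ω 1 y - u y ∈ Set.Icc (0:ℝ) 1 := by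
    intro y
    by_cases hy : y ∈ Ω
    · simp only [Set.indicator_of_mem hy, Pi.one_apply]
      exact ⟨by linarith [(hu01 y).2], by linarith [(hu01 y).1]⟩
    · rw [Set.indicator_of_notMem hy, husupp y hy]
      norm_num
  have hwv01 : ∀ y, Set.indicator Ω 1 y - v y ∈ Set.Icc (0:ℝ) 1 := by
    intro y
    by_cases hy : y ∈ Ω
    · simp only [Set.indicator_of_mem hy, Pi.one_apply]
      exact ⟨by linarith [(hv01 y).2], by linarith [(hv01 y).1]⟩
    · rw [Set.indicator_of_notMem hy, hvsupp y hy]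
      norm_num
  have hχmeas : Measurable (Set.indicator Ωᶜ (1 : EuclideanSpace ℝ (Fin d) → ℝ)) :=
    measurable_one.indicator hΩm.compl
  have hχ01 : ∀ y, Set.indicator Ωᶜ (1 : EuclideanSpace ℝ (Fin d) → ℝ) y ∈ Set.Icc (0:ℝ) 1 := by
    intro y
    by_cases hy : y ∈ Ωᶜ
    · rw [Set.indicator_of_mem hy]; norm_num
    · rw [Set.indicator_of_notMem hy]; norm_num
  have hfmeas : Measurable (fun y => |u y - v y|) := (humeas.sub hvmeas).abs
  have hf01 : ∀ y, |u y - v y| ∈ Set.Icc (0:ℝ) 1 := by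
    intro y
    refine ⟨abs_nonneg _, abs_le.mpr ⟨?_, ?_⟩⟩
    · linarith [(hu01 y).1, (hv01 y).2]
    · linarith [(hu01 y).2, (hv01 y).1]
  have hfb : ∀ y, |(fun y => |u y - v y|) y| ≤ 1 := fun y => by
    rw [abs_abs]; exact (hf01 y).2
  have hwub : ∀ y, |Set.indicator Ω 1 y - u y| ≤ 1 := fun y =>
    abs_le.mpr ⟨by linarith [(hwu01 y).1], (hwu01 y).2⟩
  have hwvb : ∀ y, |Set.indicator Ω 1 y - v y| ≤ 1 := fun y =>
    abs_le.mpr ⟨by linarith [(hwv01 y).1], (hwv01 y).2⟩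
  -- named convolutions
  set B := convK Kh (Set.indicator Ωᶜ 1) with hBdef
  set Au := convK Kh (fun y => Set.indicator Ω 1 y - u y) with hAudef
  set Av := convK Kh (fun y => Set.indicator Ω 1 y - v y) with hAvdef
  set Hf := convK Kh (fun y => |u y - v y|) with hHdef
  have hB01 : ∀ x, B x ∈ Set.Icc (0:ℝ) 1 := by rw [hBdef]; exact conv01 _ hχmeas hχ01
  have hAu01 : ∀ x, Au x ∈ Set.Icc (0:ℝ) 1 := by rw [hAudef]; exact conv01 _ hwumeas hwu01
  have hAv01 : ∀ x, Av x ∈ Set.Icc (0:ℝ) 1 := by rw [hAvdef]; exact conv01 _ hwvmeas hwv01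
  have hH01 : ∀ x, Hf x ∈ Set.Icc (0:ℝ) 1 := by rw [hHdef]; exact conv01 _ hfmeas hf01
  have hBmeas : StronglyMeasurable B := by rw [hBdef]; exact convMeas _ hχmeas
  have hAumeas : StronglyMeasurable Au := by rw [hAudef]; exact convMeas _ hwumeas
  have hAvmeas : StronglyMeasurable Av := by rw [hAvdef]; exact convMeas _ hwvmeas
  have hHmeas : StronglyMeasurable Hf := by rw [hHdef]; exact convMeas _ hfmeas
  -- difference of the two convolutions
  have hsub : ∀ x, Au x - Av x = ∫ y, Kh (x - y) * (v y - u y) := by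
    intro x
    rw [hAudef, hAvdef]
    show (∫ y, Kh (x - y) * (Set.indicator Ω 1 y - u y))
        - (∫ y, Kh (x - y) * (Set.indicator Ω 1 y - v y)) = _
    rw [← integral_sub (convInt _ hwumeas hwub x) (convInt _ hwvmeas hwvb x)]
    congr 1
    funext y
    ring
  have habs : ∀ x, |Au x - Av x| ≤ Hf x := by
    intro x
    rw [hsub x]
    have h1 : |∫ y, Kh (x - y) * (v y - u y)| ≤ ∫ y, |Kh (x - y) * (v y - u y)| :=
      absInt volume _
    have h2 : (∫ y, |Kh (x - y) * (v y - u y)|) = ∫ y, Kh (x - y) * |u y - v y| := by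
      congr 1
      funext y
      rw [abs_mul, abs_of_nonneg (hKhnn _), abs_sub_comm]
    rw [h2] at h1
    exact h1
  -- pointwise bound on the difference of integrands
  have hdiff : ∀ x,
      |(γPV x * (u x * Au x) + γSP x * (u x * B x)
          + γSV x * ((Set.indicator Ω 1 x - u x) * B x))
        - (γPV x * (v x * Av x) + γSP x * (v x * B x)
          + γSV x * ((Set.indicator Ω 1 x - v x) * B x))|
        ≤ Ctil * (3 * |u x - v x| + Hf x) := by
    intro x
    have e : (γPV x * (u x * Au x) + γSP x * (u x * B x)
          + γSV x * ((Set.indicator Ω 1 x - u x) * B x))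
        - (γPV x * (v x * Av x) + γSP x * (v x * B x)
          + γSV x * ((Set.indicator Ω 1 x - v x) * B x))
        = γPV x * ((u x - v x) * Au x + v x * (Au x - Av x))
          + (γSP x * ((u x - v x) * B x) + γSV x * ((v x - u x) * B x)) := by ring
    rw [e]
    have hAub : |Au x| ≤ 1 := abs_le.mpr ⟨by linarith [(hAu01 x).1], (hAu01 x).2⟩
    have hBb : |B x| ≤ 1 := abs_le.mpr ⟨by linarith [(hB01 x).1], (hB01 x).2⟩
    have hvb : |v x| ≤ 1 := abs_le.mpr ⟨by linarith [(hv01 x).1], (hv01 x).2⟩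
    have hH0 : 0 ≤ Hf x := (hH01 x).1
    have t1 : |γPV x * ((u x - v x) * Au x + v x * (Au x - Av x))|
        ≤ Ctil * (|u x - v x| + Hf x) := by
      rw [abs_mul, abs_of_nonneg (hPVb x).1]
      refine mul_le_mul (hPVb x).2 ?_ (abs_nonneg _) hC
      calc |(u x - v x) * Au x + v x * (Au x - Av x)|
          ≤ |(u x - v x) * Au x| + |v x * (Au x - Av x)| := abs_add_le _ _
        _ = |u x - v x| * |Au x| + |v x| * |Au x - Av x| := by rw [abs_mul, abs_mul]
        _ ≤ |u x - v x| * 1 + 1 * Hf x := by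
            refine add_le_add ?_ ?_
            · exact mul_le_mul_of_nonneg_left hAub (abs_nonneg _)
            · exact mul_le_mul hvb (habs x) (abs_nonneg _) one_pos.le
        _ = |u x - v x| + Hf x := by ring
    have t2 : |γSP x * ((u x - v x) * B x)| ≤ Ctil * |u x - v x| := by
      rw [abs_mul, abs_of_nonneg (hSPb x).1, abs_mul]
      refine mul_le_mul (hSPb x).2 ?_ (by positivity) hC
      calc |u x - v x| * |B x| ≤ |u x - v x| * 1 :=
            mul_le_mul_of_nonneg_left hBb (abs_nonneg _)
        _ = |u x - v x| := mul_one _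
    have t3 : |γSV x * ((v x - u x) * B x)| ≤ Ctil * |u x - v x| := by
      rw [abs_mul, abs_of_nonneg (hSVb x).1, abs_mul, abs_sub_comm]
      refine mul_le_mul (hSVb x).2 ?_ (by positivity) hC
      calc |u x - v x| * |B x| ≤ |u x - v x| * 1 :=
            mul_le_mul_of_nonneg_left hBb (abs_nonneg _)
        _ = |u x - v x| := mul_one _
    calc |γPV x * ((u x - v x) * Au x + v x * (Au x - Av x))
          + (γSP x * ((u x - v x) * B x) + γSV x * ((v x - u x) * B x))|
        ≤ |γPV x * ((u x - v x) * Au x + v x * (Au x - Av x))|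
          + |γSP x * ((u x - v x) * B x) + γSV x * ((v x - u x) * B x)| := abs_add_le _ _
      _ ≤ |γPV x * ((u x - v x) * Au x + v x * (Au x - Av x))|
          + (|γSP x * ((u x - v x) * B x)| + |γSV x * ((v x - u x) * B x)|) := by
            linarith [abs_add_le (γSP x * ((u x - v x) * B x)) (γSV x * ((v x - u x) * B x))]
      _ ≤ Ctil * (|u x - v x| + Hf x) + (Ctil * |u x - v x| + Ctil * |u x - v x|) := by
            linarith
      _ = Ctil * (3 * |u x - v x| + Hf x) := by ring
  -- finiteness and integrability on Ω
  haveI hfin : IsFiniteMeasure (volume.restrict Ω) :=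
    ⟨by rw [Measure.restrict_apply_univ]; exact hΩb.measure_lt_top⟩
  have intOn : ∀ (g : EuclideanSpace ℝ (Fin d) → ℝ) (M : ℝ),
      AEStronglyMeasurable g (volume.restrict Ω) → (∀ x, |g x| ≤ M) →
      Integrable g (volume.restrict Ω) := by
    intro g M hg hgb
    exact (integrable_const M).mono' hg
      (Eventually.of_forall fun x => by simpa [Real.norm_eq_abs] using hgb x)
  have hFumeas : Measurable (fun x => γPV x * (u x * Au x) + γSP x * (u x * B x)
      + γSV x * ((Set.indicator Ω 1 x - u x) * B x)) :=
    ((hPVmeas.mul (humeas.mul hAumeas.measurable)).add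
      (hSPmeas.mul (humeas.mul hBmeas.measurable))).add
      (hSVmeas.mul (hwumeas.mul hBmeas.measurable))
  have hFvmeas : Measurable (fun x => γPV x * (v x * Av x) + γSP x * (v x * B x)
      + γSV x * ((Set.indicator Ω 1 x - v x) * B x)) :=
    ((hPVmeas.mul (hvmeas.mul hAvmeas.measurable)).add
      (hSPmeas.mul (hvmeas.mul hBmeas.measurable))).add
      (hSVmeas.mul (hwvmeas.mul hBmeas.measurable))
  have hFbound : ∀ (w : EuclideanSpace ℝ (Fin d) → ℝ) (A : EuclideanSpace ℝ (Fin d) → ℝ),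
      (∀ x, w x ∈ Set.Icc (0:ℝ) 1) → (∀ x, A x ∈ Set.Icc (0:ℝ) 1) →
      (∀ y, Set.indicator Ω 1 y - w y ∈ Set.Icc (0:ℝ) 1) → ∀ x,
      |γPV x * (w x * A x) + γSP x * (w x * B x)
        + γSV x * ((Set.indicator Ω 1 x - w x) * B x)| ≤ 3 * Ctil := by
    intro w A hw01 hA01 hww01 x
    have b1 : |γPV x * (w x * A x)| ≤ Ctil := by
      rw [abs_mul, abs_of_nonneg (hPVb x).1, abs_mul]
      calc γPV x * (|w x| * |A x|) ≤ Ctil * (1 * 1) := by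
            refine mul_le_mul (hPVb x).2 ?_ (by positivity) hC
            exact mul_le_mul (abs_le.mpr ⟨by linarith [(hw01 x).1], (hw01 x).2⟩)
              (abs_le.mpr ⟨by linarith [(hA01 x).1], (hA01 x).2⟩) (abs_nonneg _) zero_le_one
        _ = Ctil := by ring
    have b2 : |γSP x * (w x * B x)| ≤ Ctil := by
      rw [abs_mul, abs_of_nonneg (hSPb x).1, abs_mul]
      calc γSP x * (|w x| * |B x|) ≤ Ctil * (1 * 1) := by
            refine mul_le_mul (hSPb x).2 ?_ (by positivity) hC
            exact mul_le_mul (abs_le.mpr ⟨by linarith [(hw01 x).1], (hw01 x).2⟩)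
              (abs_le.mpr ⟨by linarith [(hB01 x).1], (hB01 x).2⟩) (abs_nonneg _) zero_le_one
        _ = Ctil := by ring
    have b3 : |γSV x * ((Set.indicator Ω 1 x - w x) * B x)| ≤ Ctil := by
      rw [abs_mul, abs_of_nonneg (hSVb x).1, abs_mul]
      calc γSV x * (|Set.indicator Ω 1 x - w x| * |B x|) ≤ Ctil * (1 * 1) := by
            refine mul_le_mul (hSVb x).2 ?_ (by positivity) hC
            exact mul_le_mul (abs_le.mpr ⟨by linarith [(hww01 x).1], (hww01 x).2⟩)
              (abs_le.mpr ⟨by linarith [(hB01 x).1], (hB01 x).2⟩) (abs_nonneg _) zero_le_one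
        _ = Ctil := by ring
    calc |γPV x * (w x * A x) + γSP x * (w x * B x)
          + γSV x * ((Set.indicator Ω 1 x - w x) * B x)|
        ≤ |γPV x * (w x * A x) + γSP x * (w x * B x)|
          + |γSV x * ((Set.indicator Ω 1 x - w x) * B x)| := abs_add_le _ _
      _ ≤ (|γPV x * (w x * A x)| + |γSP x * (w x * B x)|)
          + |γSV x * ((Set.indicator Ω 1 x - w x) * B x)| := by
            linarith [abs_add_le (γPV x * (w x * A x)) (γSP x * (w x * B x))]
      _ ≤ 3 * Ctil := by linarith
  have hFuint : Integrable (fun x => γPV x * (u x * Au x) + γSP x * (u x * B x)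
      + γSV x * ((Set.indicator Ω 1 x - u x) * B x)) (volume.restrict Ω) :=
    intOn _ (3 * Ctil) hFumeas.aestronglyMeasurable (hFbound u Au hu01 hAu01 hwu01)
  have hFvint : Integrable (fun x => γPV x * (v x * Av x) + γSP x * (v x * B x)
      + γSV x * ((Set.indicator Ω 1 x - v x) * B x)) (volume.restrict Ω) :=
    intOn _ (3 * Ctil) hFvmeas.aestronglyMeasurable (hFbound v Av hv01 hAv01 hwv01)
  have hfintΩ : Integrable (fun x => |u x - v x|) (volume.restrict Ω) :=
    intOn _ 1 hfmeas.aestronglyMeasurable hfb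
  have hHintΩ : Integrable Hf (volume.restrict Ω) :=
    intOn _ 1 hHmeas.aestronglyMeasurable
      (fun x => abs_le.mpr ⟨by linarith [(hH01 x).1], (hH01 x).2⟩)
  -- ∫_Ω Hf ≤ ∫ |u - v| = ∫_Ω |u - v|
  have hIeq : (∫ x in Ω, |u x - v x|) = ∫ x, |u x - v x| := by
    refine setIntegral_eq_integral_of_forall_compl_eq_zero fun x hx => ?_
    simp [husupp x hx, hvsupp x hx]
  have hfint : Integrable (fun y => |u y - v y|) := by
    have heq : (fun y => |u y - v y|) = Ω.indicator (fun y => |u y - v y|) := by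
      funext y
      by_cases hy : y ∈ Ω
      · rw [Set.indicator_of_mem hy]
      · rw [Set.indicator_of_notMem hy, husupp y hy, hvsupp y hy]
        simp
    rw [heq, integrable_indicator_iff hΩm]
    exact hfintΩ
  have hInn : 0 ≤ ∫ y, |u y - v y| := integral_nonneg fun y => abs_nonneg _
  have hHle : (∫ x in Ω, Hf x) ≤ ∫ y, |u y - v y| := by
    have hHset : (∫ x in Ω, Hf x) = (∫⁻ x in Ω, ENNReal.ofReal (Hf x)).toReal :=
      integral_eq_lintegral_of_nonneg_ae (Eventually.of_forall fun x => (hH01 x).1)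
        hHmeas.aestronglyMeasurable
    have hHx : ∀ x, ENNReal.ofReal (Hf x)
        = ∫⁻ y, ENNReal.ofReal (Kh (x - y)) * ENNReal.ofReal |u y - v y| := by
      intro x
      have : Hf x = ∫ y, Kh (x - y) * |u y - v y| := by rw [hHdef]; rfl
      rw [this, ofReal_integral_eq_lintegral_ofReal (convInt _ hfmeas hfb x)
        (Eventually.of_forall fun y => mul_nonneg (hKhnn _) (abs_nonneg _))]
      congr 1
      funext y
      rw [ENNReal.ofReal_mul (hKhnn _)]
    have hkey : (∫⁻ x, ENNReal.ofReal (Hf x)) = ENNReal.ofReal (∫ y, |u y - v y|) := by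
      simp_rw [hHx]
      rw [lintegral_lintegral_swap]
      · have inner : ∀ y : EuclideanSpace ℝ (Fin d),
            (∫⁻ x, ENNReal.ofReal (Kh (x - y)) * ENNReal.ofReal |u y - v y|)
              = ENNReal.ofReal |u y - v y| := by
          intro y
          have hm1 : Measurable fun x : EuclideanSpace ℝ (Fin d) =>
              ENNReal.ofReal (Kh (x - y)) :=
            ENNReal.measurable_ofReal.comp (hKhmeas.comp (measurable_id.sub measurable_const))
          rw [lintegral_mul_const _ hm1]
          have h1 : (∫⁻ x, ENNReal.ofReal (Kh (x - y))) = ∫⁻ x, ENNReal.ofReal (Kh x) := by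
            simp_rw [sub_eq_add_neg]
            exact lintegral_add_right_eq_self (fun x => ENNReal.ofReal (Kh x)) (-y)
          rw [h1, ← ofReal_integral_eq_lintegral_ofReal hKhint
            (Eventually.of_forall fun x => hKhnn x), hKhone, ENNReal.ofReal_one, one_mul]
        simp_rw [inner]
        rw [← ofReal_integral_eq_lintegral_ofReal hfint
          (Eventually.of_forall fun y => abs_nonneg _)]
      · exact ((ENNReal.measurable_ofReal.comp
          (hKhmeas.comp (measurable_fst.sub measurable_snd))).mul
          (ENNReal.measurable_ofReal.comp (hfmeas.comp measurable_snd))).aemeasurable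
    calc (∫ x in Ω, Hf x) = (∫⁻ x in Ω, ENNReal.ofReal (Hf x)).toReal := hHset
      _ ≤ (∫⁻ x, ENNReal.ofReal (Hf x)).toReal := by
          refine ENNReal.toReal_mono ?_ (setLIntegral_le_lintegral _ _)
          rw [hkey]
          exact ENNReal.ofReal_ne_top
      _ = ∫ y, |u y - v y| := by rw [hkey, ENNReal.toReal_ofReal hInn]
  -- main estimate
  have main : |(∫ x in Ω, (γPV x * (u x * Au x) + γSP x * (u x * B x)
        + γSV x * ((Set.indicator Ω 1 x - u x) * B x)))
      - ∫ x in Ω, (γPV x * (v x * Av x) + γSP x * (v x * B x)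
        + γSV x * ((Set.indicator Ω 1 x - v x) * B x))|
      ≤ 4 * Ctil * ∫ x in Ω, |u x - v x| := by
    rw [← integral_sub hFuint hFvint]
    have step1 : |∫ x in Ω, ((γPV x * (u x * Au x) + γSP x * (u x * B x)
          + γSV x * ((Set.indicator Ω 1 x - u x) * B x))
        - (γPV x * (v x * Av x) + γSP x * (v x * B x)
          + γSV x * ((Set.indicator Ω 1 x - v x) * B x)))|
        ≤ ∫ x in Ω, Ctil * (3 * |u x - v x| + Hf x) := by
      refine le_trans (absInt (volume.restrict Ω) _) ?_
      refine integral_mono ((hFuint.sub hFvint).abs) ?_ fun x => hdiff x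
      exact ((hfintΩ.const_mul 3).add hHintΩ).const_mul Ctil
    refine le_trans step1 ?_
    rw [integral_const_mul, integral_add (hfintΩ.const_mul 3) hHintΩ, integral_const_mul]
    have : (∫ x in Ω, Hf x) ≤ ∫ x in Ω, |u x - v x| := by rw [hIeq]; exact hHle
    have hI0 : 0 ≤ ∫ x in Ω, |u x - v x| := integral_nonneg fun x => abs_nonneg _
    nlinarith
  -- conclude
  rw [← mul_sub, abs_mul, abs_of_nonneg (inv_nonneg.mpr hs.le)]
  calc (Real.sqrt h)⁻¹ * |(∫ x in Ω, (γPV x * (u x * Au x) + γSP x * (u x * B x)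
        + γSV x * ((Set.indicator Ω 1 x - u x) * B x)))
      - ∫ x in Ω, (γPV x * (v x * Av x) + γSP x * (v x * B x)
        + γSV x * ((Set.indicator Ω 1 x - v x) * B x))|
      ≤ (Real.sqrt h)⁻¹ * (4 * Ctil * ∫ x in Ω, |u x - v x|) :=
        mul_le_mul_of_nonneg_left main (inv_nonneg.mpr hs.le)
    _ = (4 * Ctil / Real.sqrt h) * ∫ x in Ω, |u x - v x| := by
        rw [div_eq_mul_inv]; ring
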